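/- The m-th derivative of the two-parameter Mittag-Leffler function satisfies (d^m/dz^m) E_{α,β}(z) = m! · E_{α, mα+β}^{m+1}(z) for every nonnegative integer m, where α > 0. -/

import Mathlib

open scoped BigOperators

/-- Pochhammer symbol `(γ)_k = γ(γ+1)⋯(γ+k-1)`. -/
noncomputable def poch (γ : ℝ) (k : ℕ) : ℝ := ∏ i ∈ Finset.range k, (γ + i)

/-- The Prabhakar (three-parameter Mittag-Leffler) function. -/
noncomputable def prabhakar (α β γ : ℝ) (z : ℂ) : ℂ :=
  ∑' k : ℕ, ((poch γ k / (Nat.factorial k * Real.Gamma (α * k + β)) : ℝ) : ℂ) * z ^ k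

/-- The two-parameter Mittag-Leffler function `E_{α,β}(z) = Σ_k z^k / Γ(αk+β)`. -/
noncomputable def mittagLeffler2 (α β : ℝ) (z : ℂ) : ℂ :=
  ∑' k : ℕ, z ^ k / ((Real.Gamma (α * k + β) : ℝ) : ℂ)

open Filter

section Aux

/-- Summability of `(k+1)^d * R^k / Γ(α k + b)` for `α > 0`. -/
lemma ML.summable_aux {α : ℝ} (hα : 0 < α) (b : ℝ) (d : ℕ) {R : ℝ} (hR : 0 < R) :
    Summable (fun k : ℕ => ((k : ℝ) + 1) ^ d * R ^ k / Real.Gamma (α * k + b)) := by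
  set Q : ℕ := ⌈(2 * R + 2) ^ (α⁻¹)⌉₊ with hQ
  set q : ℝ := (Q : ℝ) + 1 with hq
  have hQ0 : (0:ℝ) ≤ (Q:ℝ) := Nat.cast_nonneg _
  have hq1 : (1 : ℝ) ≤ q := by rw [hq]; linarith
  have h2R : (0 : ℝ) < 2 * R + 2 := by linarith
  have hqα : 2 * R + 2 ≤ q ^ α := by
    have h1 : (2 * R + 2) ^ (α⁻¹) ≤ q := by
      have := Nat.le_ceil ((2 * R + 2) ^ (α⁻¹))
      rw [hq, hQ]; linarith
    calc 2 * R + 2 = ((2 * R + 2) ^ (α⁻¹)) ^ α := by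
          rw [← Real.rpow_mul h2R.le, inv_mul_cancel₀ hα.ne', Real.rpow_one]
      _ ≤ q ^ α := Real.rpow_le_rpow (by positivity) h1 hα.le
  have hqα0 : (0:ℝ) < q ^ α := by linarith
  set ρ : ℝ := R / q ^ α with hρdef
  have hρ0 : 0 < ρ := div_pos hR hqα0
  have hρ1 : ρ < 1 := by
    rw [hρdef, div_lt_one hqα0]; linarith
  set C : ℝ := q ^ ((Q : ℝ) + 2 - b) with hC
  have hC0 : 0 < C := Real.rpow_pos_of_pos (by linarith) _
  have hgsum : Summable (fun k : ℕ => C * (((k : ℝ) + 1) ^ d * ρ ^ k)) := by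
    apply Summable.mul_left
    have h0 : Summable (fun n : ℕ => (n : ℝ) ^ d * ρ ^ n) :=
      summable_pow_mul_geometric_of_norm_lt_one d
        (by rw [Real.norm_eq_abs, abs_of_pos hρ0]; exact hρ1)
    have h1 : Summable (fun k : ℕ => ((k + 1 : ℕ) : ℝ) ^ d * ρ ^ (k + 1)) :=
      (summable_nat_add_iff (f := fun n : ℕ => (n : ℝ) ^ d * ρ ^ n) 1).mpr h0
    have h2 := h1.mul_left ρ⁻¹
    refine h2.congr fun k => ?_
    push_cast
    field_simp
    ring
  apply Summable.of_norm_bounded_eventually hgsum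
  rw [Nat.cofinite_eq_atTop]
  have hN : ∀ᶠ k : ℕ in atTop, ((Q : ℝ) + 3) ≤ α * k + b := by
    have : Tendsto (fun k : ℕ => α * k + b) atTop atTop := by
      apply Tendsto.atTop_add _ tendsto_const_nhds
      exact (tendsto_natCast_atTop_atTop).const_mul_atTop hα
    exact this.eventually_ge_atTop _
  filter_upwards [hN] with k hk
  set x : ℝ := α * k + b with hx
  have hx0 : (0:ℝ) ≤ x := by linarith
  set n : ℕ := ⌊x⌋₊ with hn
  have hn3 : Q + 3 ≤ n := by
    apply Nat.le_floor; push_cast; linarith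
  have hnx : (n : ℝ) ≤ x := Nat.floor_le hx0
  have hxn : x < n + 1 := Nat.lt_floor_add_one x
  have hn2 : (2:ℝ) ≤ (n:ℝ) := by
    have : (3:ℕ) ≤ n := le_trans (by omega) hn3
    have := (Nat.cast_le (α := ℝ)).mpr this
    push_cast at this ⊢; linarith
  have hΓmono : Real.Gamma (n : ℝ) ≤ Real.Gamma x :=
    Real.Gamma_strictMonoOn_Ici.monotoneOn (Set.mem_Ici.mpr hn2)
      (Set.mem_Ici.mpr (le_trans hn2 hnx)) hnx
  have hΓn : Real.Gamma (n : ℝ) = (Nat.factorial (n - 1) : ℝ) := by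
    have h1 : (1:ℕ) ≤ n := by omega
    have : ((n - 1 : ℕ) : ℝ) + 1 = (n : ℝ) := by
      have := Nat.cast_sub h1 (R := ℝ); push_cast at this ⊢; linarith [this]
    rw [← this, Real.Gamma_nat_eq_factorial]
  set e : ℕ := n - 1 - Q with he
  have hefact : ((Q + 1 : ℕ) : ℝ) ^ e ≤ (Nat.factorial (n - 1) : ℝ) := by
    have h1 : Nat.factorial Q * (Q + 1) ^ e ≤ Nat.factorial (Q + e) :=
      Nat.factorial_mul_pow_le_factorial
    have h2 : Q + e = n - 1 := by omega
    rw [h2] at h1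
    have h3 : (Q + 1) ^ e ≤ Nat.factorial (n - 1) :=
      le_trans (Nat.le_mul_of_pos_left _ (Nat.factorial_pos Q)) h1
    exact_mod_cast h3
  have hqe : ((Q + 1 : ℕ) : ℝ) ^ e = q ^ (e : ℕ) := by push_cast [hq]; ring
  have hΓx : q ^ (e:ℕ) ≤ Real.Gamma x := by
    rw [← hqe]; calc ((Q + 1 : ℕ):ℝ) ^ e ≤ (Nat.factorial (n-1) : ℝ) := hefact
      _ = Real.Gamma (n:ℝ) := hΓn.symm
      _ ≤ Real.Gamma x := hΓmono
  have hΓpos : 0 < Real.Gamma x :=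
    lt_of_lt_of_le (by positivity) hΓx
  have hkey : (q ^ α) ^ (k:ℕ) ≤ C * q ^ (e:ℕ) := by
    have h1 : (q ^ α) ^ (k:ℕ) = q ^ (α * k) := by
      rw [← Real.rpow_natCast (q ^ α) k, ← Real.rpow_mul (by linarith)]
    have h2 : q ^ ((e:ℝ) + ((Q:ℝ) + 2 - b)) = C * q ^ (e:ℕ) := by
      rw [Real.rpow_add (by linarith), ← Real.rpow_natCast q e, hC]; ring
    rw [h1, ← h2]
    apply Real.rpow_le_rpow_of_exponent_le hq1
    have hen : (n : ℝ) = (e : ℝ) + Q + 1 := by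
      have : n = e + Q + 1 := by omega
      rw [this]; push_cast; ring
    have : α * k ≤ x - b := by rw [hx]; linarith
    linarith
  have hterm : ((k : ℝ) + 1) ^ d * R ^ k / Real.Gamma x ≤ C * (((k : ℝ) + 1) ^ d * ρ ^ k) := by
    have hkd : (0:ℝ) ≤ ((k : ℝ) + 1) ^ d := by positivity
    have hRk : (0:ℝ) < R ^ k := by positivity
    have h1 : R ^ k / Real.Gamma x ≤ C * ρ ^ k := by
      rw [hρdef, div_pow, div_le_iff₀ hΓpos]
      have hqαk : (0:ℝ) < (q^α)^(k:ℕ) := by positivity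
      rw [mul_comm C _, mul_assoc, div_mul_eq_mul_div, le_div_iff₀ hqαk]
      calc R ^ k * (q^α)^(k:ℕ) ≤ R ^ k * (C * q ^ (e:ℕ)) := by
            apply mul_le_mul_of_nonneg_left hkey hRk.le
        _ ≤ R ^ k * (C * Real.Gamma x) := by
            apply mul_le_mul_of_nonneg_left _ hRk.le
            exact mul_le_mul_of_nonneg_left hΓx hC0.le
    calc ((k : ℝ) + 1) ^ d * R ^ k / Real.Gamma x
        = ((k : ℝ) + 1) ^ d * (R ^ k / Real.Gamma x) := by ring
      _ ≤ ((k : ℝ) + 1) ^ d * (C * ρ ^ k) := mul_le_mul_of_nonneg_left h1 hkd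
      _ = C * (((k : ℝ) + 1) ^ d * ρ ^ k) := by ring
  rw [Real.norm_eq_abs, abs_of_nonneg (by positivity)]
  exact hterm

/-- Termwise differentiation of a power series whose coefficients decay fast enough. -/
lemma ML.hasDerivAt_tsum_pow (c : ℕ → ℂ)
    (H : ∀ R : ℝ, 0 < R → Summable (fun k : ℕ => ((k : ℝ) + 1) * ‖c (k + 1)‖ * R ^ k)) (z : ℂ) :
    HasDerivAt (fun w : ℂ => ∑' k : ℕ, c k * w ^ k)
      (∑' k : ℕ, ((k : ℂ) + 1) * c (k + 1) * z ^ k) z := by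
  set R : ℝ := ‖z‖ + 1 with hR
  have hR0 : (0:ℝ) < R := by positivity
  have hR1 : (1:ℝ) ≤ R := by rw [hR]; linarith [norm_nonneg z]
  set t : Set ℂ := Metric.ball 0 R with ht
  set u : ℕ → ℝ := fun k => (k : ℝ) * ‖c k‖ * R ^ (k - 1) with hu
  have husum : Summable u := by
    rw [← summable_nat_add_iff 1]
    refine (H R hR0).congr fun k => ?_
    simp [hu]
  set g' : ℕ → ℂ → ℂ := fun k y => c k * ((k : ℂ) * y ^ (k - 1)) with hg'
  have hderiv : ∀ (k : ℕ) (y : ℂ), y ∈ t → HasDerivAt (fun w : ℂ => c k * w ^ k) (g' k y) y :=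
    fun k y _ => (hasDerivAt_pow k y).const_mul (c k)
  have hbound : ∀ (k : ℕ) (y : ℂ), y ∈ t → ‖g' k y‖ ≤ u k := by
    intro k y hy
    have hyR : ‖y‖ ≤ R := by
      rw [ht, Metric.mem_ball, dist_zero_right] at hy; linarith
    have : ‖g' k y‖ = ‖c k‖ * ((k:ℝ) * ‖y‖ ^ (k - 1)) := by
      simp [hg', norm_mul, norm_pow]
    rw [this, hu]
    dsimp only
    have h1 : ‖y‖ ^ (k-1) ≤ R ^ (k-1) := pow_le_pow_left₀ (norm_nonneg _) hyR _
    calc ‖c k‖ * ((k:ℝ) * ‖y‖ ^ (k - 1)) = (k:ℝ) * ‖c k‖ * ‖y‖ ^ (k - 1) := by ring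
      _ ≤ (k:ℝ) * ‖c k‖ * R ^ (k - 1) :=
          mul_le_mul_of_nonneg_left h1 (by positivity)
  have hsum0 : Summable (fun k : ℕ => c k * (0:ℂ) ^ k) := by
    apply summable_of_ne_finset_zero (s := {0})
    intro k hk
    have : k ≠ 0 := by simpa using hk
    simp [zero_pow this]
  have hmem : z ∈ t := by rw [ht, Metric.mem_ball, dist_zero_right]; linarith
  have h0mem : (0:ℂ) ∈ t := by rw [ht, Metric.mem_ball, dist_self]; exact hR0
  have key := hasDerivAt_tsum_of_isPreconnected husum Metric.isOpen_ball
    (convex_ball (0:ℂ) R).isPreconnected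
    hderiv hbound h0mem hsum0 hmem
  convert key using 1
  · rfl
  · rfl
  have hsa : Summable (fun k => g' k z) :=
    Summable.of_norm_bounded husum fun k => hbound k z hmem
  rw [Summable.tsum_eq_zero_add hsa]
  have : g' 0 z = 0 := by simp [hg']
  rw [this, zero_add]
  apply tsum_congr
  intro k
  simp [hg']
  ring

lemma ML.poch_succ (γ : ℝ) (k : ℕ) : poch γ (k + 1) = γ * poch (γ + 1) k := by
  rw [poch, poch, Finset.prod_range_succ']
  simp only [Nat.cast_zero, add_zero, Nat.cast_add, Nat.cast_one]
  rw [mul_comm]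
  congr 1
  apply Finset.prod_congr rfl
  intro i _
  ring

lemma ML.poch_one (k : ℕ) : poch 1 k = (Nat.factorial k : ℝ) := by
  induction k with
  | zero => simp [poch]
  | succ n ih =>
    rw [poch, Finset.prod_range_succ, ← poch, ih]
    push_cast [Nat.factorial_succ]
    ring

lemma ML.poch_nonneg {γ : ℝ} (hγ : 0 ≤ γ) (k : ℕ) : 0 ≤ poch γ k := by
  apply Finset.prod_nonneg
  intro i _
  positivity

lemma ML.factorial_eq_prod (k : ℕ) :
    (Nat.factorial k : ℝ) = ∏ i ∈ Finset.range k, ((i : ℝ) + 1) := by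
  induction k with
  | zero => simp
  | succ n ih =>
    rw [Finset.prod_range_succ, ← ih]
    push_cast [Nat.factorial_succ]
    ring

lemma ML.poch_le (m : ℕ) (k : ℕ) :
    poch ((m : ℝ) + 1) k ≤ ((m : ℝ) + 1) ^ k * (Nat.factorial k : ℝ) := by
  have : ((m : ℝ) + 1) ^ k * (Nat.factorial k : ℝ) =
      ∏ i ∈ Finset.range k, (((m : ℝ) + 1) * ((i : ℝ) + 1)) := by
    rw [Finset.prod_mul_distrib, Finset.prod_const, Finset.card_range, ML.factorial_eq_prod]
  rw [this, poch]
  apply Finset.prod_le_prod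
  · intro i _; positivity
  · intro i _
    have hi : (0:ℝ) ≤ (i:ℝ) := Nat.cast_nonneg _
    have hm : (0:ℝ) ≤ (m:ℝ) := Nat.cast_nonneg _
    nlinarith

/-- The Prabhakar coefficients. -/
noncomputable def ML.pc (α b : ℝ) (m k : ℕ) : ℝ :=
  poch ((m : ℝ) + 1) k / (Nat.factorial k * Real.Gamma (α * k + b))

lemma ML.prabhakar_eq (α b : ℝ) (m : ℕ) (z : ℂ) :
    prabhakar α b ((m : ℝ) + 1) z = ∑' k : ℕ, ((ML.pc α b m k : ℝ) : ℂ) * z ^ k := rfl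

lemma ML.pc_rec (α b : ℝ) (m k : ℕ) :
    ((k : ℝ) + 1) * ML.pc α b m (k + 1) = ((m : ℝ) + 1) * ML.pc α (b + α) (m + 1) k := by
  have harg : α * ((k : ℕ) + 1 : ℕ) + b = α * k + (b + α) := by push_cast; ring
  have hpoch : poch ((m : ℝ) + 1) (k + 1) = ((m : ℝ) + 1) * poch (((m + 1 : ℕ) : ℝ) + 1) k := by
    rw [ML.poch_succ]; push_cast; ring_nf
  unfold ML.pc
  rw [harg, hpoch]
  rcases eq_or_ne (Real.Gamma (α * k + (b + α))) 0 with h0 | h0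
  · simp [h0]
  · have hf1 : ((Nat.factorial (k + 1) : ℝ)) ≠ 0 := by positivity
    have hf2 : ((Nat.factorial k : ℝ)) ≠ 0 := by positivity
    rw [Nat.factorial_succ]
    push_cast
    field_simp

lemma ML.H_aux {α : ℝ} (hα : 0 < α) (b : ℝ) (m : ℕ) {R : ℝ} (hR : 0 < R) :
    Summable (fun k : ℕ => ((k : ℝ) + 1) * ‖((ML.pc α b m (k + 1) : ℝ) : ℂ)‖ * R ^ k) := by
  have hmaj := (ML.summable_aux hα (b + α) 1 (R := ((m : ℝ) + 1) * R)
    (by positivity)).mul_left ((m : ℝ) + 1)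
  apply Summable.of_norm_bounded_eventually hmaj
  rw [Nat.cofinite_eq_atTop]
  have hN : ∀ᶠ k : ℕ in atTop, (1:ℝ) ≤ α * k + (b + α) := by
    have : Tendsto (fun k : ℕ => α * k + (b + α)) atTop atTop := by
      apply Tendsto.atTop_add _ tendsto_const_nhds
      exact (tendsto_natCast_atTop_atTop).const_mul_atTop hα
    exact this.eventually_ge_atTop _
  filter_upwards [hN] with k hk
  have harg : α * ((k : ℕ) + 1 : ℕ) + b = α * k + (b + α) := by push_cast; ring
  set Γ : ℝ := Real.Gamma (α * k + (b + α)) with hΓ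
  have hΓpos : 0 < Γ := Real.Gamma_pos_of_pos (by linarith)
  have hm1 : (0:ℝ) < (m:ℝ) + 1 := by positivity
  have hF : (0:ℝ) < (Nat.factorial (k+1) : ℝ) := by positivity
  have hpoch0 : 0 ≤ poch ((m : ℝ) + 1) (k + 1) := ML.poch_nonneg (by positivity) _
  have habs : ‖((ML.pc α b m (k + 1) : ℝ) : ℂ)‖
      = poch ((m : ℝ) + 1) (k + 1) / ((Nat.factorial (k+1) : ℝ) * Γ) := by
    rw [Complex.norm_real, Real.norm_eq_abs, ML.pc, harg, abs_of_nonneg (by positivity)]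
  have hterm : ((k : ℝ) + 1) * ‖((ML.pc α b m (k + 1) : ℝ) : ℂ)‖ * R ^ k
      ≤ ((m : ℝ) + 1) * (((k : ℝ) + 1) ^ 1 * (((m : ℝ) + 1) * R) ^ k / Γ) := by
    rw [habs]
    have h1 : ((k : ℝ) + 1) * (poch ((m : ℝ) + 1) (k + 1) / ((Nat.factorial (k+1) : ℝ) * Γ)) * R ^ k
        = ((k : ℝ) + 1) * poch ((m : ℝ) + 1) (k + 1) * R ^ k / ((Nat.factorial (k+1) : ℝ) * Γ) := by
      ring
    rw [h1]
    have h2 : ((k : ℝ) + 1) * poch ((m : ℝ) + 1) (k + 1) * R ^ k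
        ≤ ((k : ℝ) + 1) * (((m : ℝ) + 1) ^ (k+1) * (Nat.factorial (k+1) : ℝ)) * R ^ k := by
      have := ML.poch_le m (k + 1)
      have hk1 : (0:ℝ) ≤ (k:ℝ) + 1 := by positivity
      have hRk : (0:ℝ) ≤ R ^ k := by positivity
      apply mul_le_mul_of_nonneg_right _ hRk
      exact mul_le_mul_of_nonneg_left this hk1
    calc ((k : ℝ) + 1) * poch ((m : ℝ) + 1) (k + 1) * R ^ k / ((Nat.factorial (k+1) : ℝ) * Γ)
        ≤ ((k : ℝ) + 1) * (((m : ℝ) + 1) ^ (k+1) * (Nat.factorial (k+1) : ℝ)) * R ^ k /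
            ((Nat.factorial (k+1) : ℝ) * Γ) := by
          apply div_le_div_of_nonneg_right h2 (by positivity)
      _ = ((m : ℝ) + 1) * (((k : ℝ) + 1) ^ 1 * (((m : ℝ) + 1) * R) ^ k / Γ) := by
          rw [mul_pow, pow_succ]
          field_simp
  rw [Real.norm_eq_abs, abs_of_nonneg (by positivity)]
  exact hterm

/-- One derivative of the Prabhakar function. -/
lemma ML.deriv_step {α : ℝ} (hα : 0 < α) (b : ℝ) (m : ℕ) (z : ℂ) :
    HasDerivAt (prabhakar α b ((m : ℝ) + 1))
      (((m : ℂ) + 1) * prabhakar α (b + α) ((m : ℝ) + 2) z) z := by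
  have H : ∀ R : ℝ, 0 < R →
      Summable (fun k : ℕ => ((k : ℝ) + 1) * ‖((ML.pc α b m (k + 1) : ℝ) : ℂ)‖ * R ^ k) :=
    fun R hR => ML.H_aux hα b m hR
  have h := ML.hasDerivAt_tsum_pow (fun k => ((ML.pc α b m k : ℝ) : ℂ)) H z
  have hfun : (prabhakar α b ((m : ℝ) + 1))
      = fun w : ℂ => ∑' k : ℕ, ((ML.pc α b m k : ℝ) : ℂ) * w ^ k := rfl
  rw [hfun]
  convert h using 1
  have h2 : prabhakar α (b + α) ((m : ℝ) + 2) z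
      = ∑' k : ℕ, ((ML.pc α (b + α) (m + 1) k : ℝ) : ℂ) * z ^ k := by
    have : ((m : ℝ) + 2) = (((m + 1 : ℕ) : ℝ) + 1) := by push_cast; ring
    rw [this, ML.prabhakar_eq]
  rw [h2, ← tsum_mul_left]
  apply tsum_congr
  intro k
  have := congrArg (fun r : ℝ => (r : ℂ)) (ML.pc_rec α b m k)
  push_cast at this
  rw [← mul_assoc, ← this]

end Aux

/-- `(d/dz)^m E_{α,β}(z) = m! · E_{α, mα+β}^{m+1}(z)` for every `m : ℕ`, `α > 0`. -/
theorem mittagLeffler_iteratedDeriv (α β : ℝ) (hα : 0 < α) (m : ℕ) (z : ℂ) :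
    iteratedDeriv m (mittagLeffler2 α β) z =
      (Nat.factorial m : ℂ) * prabhakar α (m * α + β) (m + 1) z := by
  induction m generalizing z with
  | zero =>
    simp only [iteratedDeriv_zero, Nat.factorial_zero, Nat.cast_one, one_mul,
      Nat.cast_zero, zero_mul, zero_add]
    rw [mittagLeffler2, prabhakar]
    apply tsum_congr
    intro k
    rw [ML.poch_one]
    have hf : ((Nat.factorial k : ℝ)) ≠ 0 := by positivity
    rw [div_mul_cancel_left₀ hf]
    push_cast
    rw [div_eq_mul_inv, mul_comm]
  | succ n ih =>
    rw [iteratedDeriv_succ]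
    have hfun : iteratedDeriv n (mittagLeffler2 α β)
        = fun w : ℂ => (Nat.factorial n : ℂ) * prabhakar α (n * α + β) ((n : ℝ) + 1) w :=
      funext ih
    rw [hfun]
    have hd := (ML.deriv_step hα (n * α + β) n z).const_mul ((Nat.factorial n : ℂ))
    rw [hd.deriv]
    have harg : prabhakar α (↑n * α + β + α) ((n : ℝ) + 2)
        = prabhakar α (↑(n + 1) * α + β) (↑(n + 1) + 1) := by
      congr 1 <;> push_cast <;> ring
    rw [harg]
    push_cast [Nat.factorial_succ]
    ring
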